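/- Let A, D, B be functions from ℂ to the endomorphisms of a module over ℂ, and let a₁, a₂, d₁, d₂ : ℂ×ℂ → ℂ satisfy the commutation relations A(u)B(v) = a₁(u,v)B(v)A(u) + a₂(u,v)B(u)A(v), B(u)B(v) = B(v)B(u), and the consistency identity a₁(u,w)a₂(u,v) + a₂(u,w)a₂(w,v) = a₂(u,v)a₁(v,w) for all u, v, w. Then for all n ≥ 1 and all u, u₁,…,uₙ, the identity A(u)∏_{k=1}^{n} B(u_k) = ∏_{k=1}^{n} a₁(u,u_k) (∏_{k=1}^{n} B(u_k)) A(u) + Σ_{j=1}^{n} a₂(u,u_j) ∏_{k≠j} a₁(u_j,u_k) B(u) (∏_{k≠j} B(u_k)) A(u_j) holds. -/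

import Mathlib

set_option linter.unusedSectionVars false

lemma scal_aux (a1 a2 : ℂ → ℂ → ℂ)
    (hId : ∀ u v w, a1 u w * a2 u v + a2 u w * a2 w v = a2 u v * a1 v w)
    (us : ℕ → ℂ) :
    ∀ n u v, (∏ k ∈ Finset.range n, a1 u (us k)) * a2 u v
      + ∑ j ∈ Finset.range n,
          (a2 u (us j) * ∏ k ∈ (Finset.range n).erase j, a1 (us j) (us k)) * a2 (us j) v
      = a2 u v * ∏ k ∈ Finset.range n, a1 v (us k) := by
  intro n
  induction n with
  | zero => simp
  | succ n IH =>
    intro u v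
    have hen : (Finset.range (n+1)).erase n = Finset.range n := by
      rw [Finset.range_add_one, Finset.erase_insert Finset.notMem_range_self]
    rw [Finset.prod_range_succ, Finset.sum_range_succ, Finset.prod_range_succ, hen]
    have hsum : ∀ j ∈ Finset.range n,
        (a2 u (us j) * ∏ k ∈ (Finset.range (n+1)).erase j, a1 (us j) (us k)) * a2 (us j) v
        = ((a2 u (us j) * ∏ k ∈ (Finset.range n).erase j, a1 (us j) (us k)) * a2 (us j) v) * a1 v (us n)
          - ((a2 u (us j) * ∏ k ∈ (Finset.range n).erase j, a1 (us j) (us k)) * a2 (us j) (us n)) * a2 (us n) v := by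
      intro j hj
      have hjn : n ≠ j := fun h => absurd h.symm (Finset.mem_range.1 hj).ne
      rw [Finset.range_add_one, Finset.erase_insert_of_ne hjn,
        Finset.prod_insert (fun h => absurd (Finset.mem_of_mem_erase h) (by simp))]
      linear_combination (a2 u (us j) * ∏ k ∈ (Finset.range n).erase j, a1 (us j) (us k)) * hId (us j) v (us n)
    rw [Finset.sum_congr rfl hsum, Finset.sum_sub_distrib, ← Finset.sum_mul, ← Finset.sum_mul]
    linear_combination a1 v (us n) * IH u v - a2 (us n) v * IH u (us n)
      + (∏ k ∈ Finset.range n, a1 u (us k)) * hId u v (us n)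

section
variable {R : Type*} [Ring R] [Algebra ℂ R] (B : ℂ → R) (us : ℕ → ℂ)

lemma Bcomm (hBB : ∀ u v, B u * B v = B v * B u) (v : ℂ) :
    ∀ l : List ℕ, B v * (l.map (fun k => B (us k))).prod
      = (l.map (fun k => B (us k))).prod * B v := by
  intro l
  induction l with
  | nil => simp
  | cons a t ih =>
    simp only [List.map_cons, List.prod_cons, ← mul_assoc, hBB v (us a)]
    rw [mul_assoc, ih, ← mul_assoc]

lemma Bpairwise (hBB : ∀ u v, B u * B v = B v * B u) :
    ∀ l : List ℕ, (l.map (fun k => B (us k))).Pairwise Commute := by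
  intro l
  induction l with
  | nil => simp
  | cons a t ih =>
    simp only [List.map_cons, List.pairwise_cons]
    exact ⟨fun x hx => by
      simp only [List.mem_map] at hx
      obtain ⟨k, -, rfl⟩ := hx
      exact (hBB (us a) (us k)), ih⟩

lemma QB (hBB : ∀ u v, B u * B v = B v * B u) (n j : ℕ) (hj : j < n) :
    (((List.range n).filter (fun k => k ≠ j)).map (fun k => B (us k))).prod * B (us j)
      = ((List.range n).map (fun k => B (us k))).prod := by
  have hmem : j ∈ List.range n := List.mem_range.2 hj
  have hperm : (List.range n).Perm (j :: (List.range n).erase j) :=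
    List.perm_cons_erase hmem
  have hef : (List.range n).erase j = (List.range n).filter (fun k => k ≠ j) := by
    rw [(List.nodup_range (n := n)).erase_eq_filter j]
    congr 1
    ext k
    simp only [bne, Ne, decide_not]
    cases h : k == j <;> simp_all
  have hp2 : ((List.range n).map (fun k => B (us k))).Perm
      (((j :: (List.range n).erase j)).map (fun k => B (us k))) := hperm.map _
  have := hp2.prod_eq' (Bpairwise B us hBB _)
  rw [this, List.map_cons, List.prod_cons, hef, Bcomm B us hBB]
end

theorem stmt_6 {R : Type*} [Ring R] [Algebra ℂ R]
    (A B : ℂ → R) (a1 a2 : ℂ → ℂ → ℂ)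
    (hAB : ∀ u v, A u * B v = a1 u v • (B v * A u) + a2 u v • (B u * A v))
    (hBB : ∀ u v, B u * B v = B v * B u)
    (hId : ∀ u v w, a1 u w * a2 u v + a2 u w * a2 w v = a2 u v * a1 v w)
    (n : ℕ) (hn : 1 ≤ n) (u : ℂ) (us : ℕ → ℂ) :
    A u * ((List.range n).map (fun k => B (us k))).prod
    = (∏ k ∈ Finset.range n, a1 u (us k)) •
        (((List.range n).map (fun k => B (us k))).prod * A u)
      + ∑ j ∈ Finset.range n,
          (a2 u (us j) * ∏ k ∈ (Finset.range n).erase j, a1 (us j) (us k)) •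
            (B u * (((List.range n).filter (fun k => k ≠ j)).map
                (fun k => B (us k))).prod * A (us j)) := by
  clear hn
  induction n with
  | zero => simp
  | succ n IH =>
    have hPsucc : ((List.range (n+1)).map (fun k => B (us k))).prod
        = ((List.range n).map (fun k => B (us k))).prod * B (us n) := by
      rw [List.range_succ]; simp
    have hen : (Finset.range (n+1)).erase n = Finset.range n := by
      rw [Finset.range_add_one, Finset.erase_insert Finset.notMem_range_self]
    have hfn : (List.range (n+1)).filter (fun k => k ≠ n) = List.range n := by
      rw [List.range_succ, List.filter_append]
      have h1 : (List.range n).filter (fun k => k ≠ n) = List.range n := by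
        rw [List.filter_eq_self]
        intro a ha
        simp only [List.mem_range] at ha
        simp [Nat.ne_of_lt ha]
      simp only [h1]
      simp
    have hstep : ∀ (X : R) (w v : ℂ), (X * A w) * B v
        = a1 w v • (X * B v * A w) + a2 w v • (X * B w * A v) := by
      intro X w v
      rw [mul_assoc, hAB, mul_add, mul_smul_comm, mul_smul_comm, ← mul_assoc, ← mul_assoc]
    have hL : A u * (((List.range n).map (fun k => B (us k))).prod * B (us n))
        = (A u * ((List.range n).map (fun k => B (us k))).prod) * B (us n) :=
      (mul_assoc _ _ _).symm
    rw [hPsucc, hL, IH, add_mul, smul_mul_assoc, hstep, Finset.sum_mul]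
    have hsumL : ∀ j ∈ Finset.range n,
        ((a2 u (us j) * ∏ k ∈ (Finset.range n).erase j, a1 (us j) (us k)) •
          (B u * (((List.range n).filter (fun k => k ≠ j)).map
              (fun k => B (us k))).prod * A (us j))) * B (us n)
        = ((a2 u (us j) * ∏ k ∈ (Finset.range n).erase j, a1 (us j) (us k)) * a1 (us j) (us n)) •
            (B u * ((((List.range n).filter (fun k => k ≠ j)).map
                (fun k => B (us k))).prod * B (us n)) * A (us j))
          + ((a2 u (us j) * ∏ k ∈ (Finset.range n).erase j, a1 (us j) (us k)) * a2 (us j) (us n)) •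
            (B u * ((List.range n).map (fun k => B (us k))).prod * A (us n)) := by
      intro j hj
      rw [smul_mul_assoc, hstep, smul_add, smul_smul, smul_smul,
        mul_assoc (B u) _ (B (us n)), mul_assoc (B u) _ (B (us j)),
        QB B us hBB n j (Finset.mem_range.1 hj)]
    rw [Finset.sum_congr rfl hsumL, Finset.sum_add_distrib, ← Finset.sum_smul]
    rw [smul_add, smul_smul, smul_smul, ← Bcomm B us hBB u (List.range n)]
    -- RHS side
    rw [Finset.prod_range_succ, Finset.sum_range_succ, hen, hfn]
    have hsumR : ∀ j ∈ Finset.range n,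
        (a2 u (us j) * ∏ k ∈ (Finset.range (n+1)).erase j, a1 (us j) (us k)) •
          (B u * (((List.range (n+1)).filter (fun k => k ≠ j)).map
              (fun k => B (us k))).prod * A (us j))
        = ((a2 u (us j) * ∏ k ∈ (Finset.range n).erase j, a1 (us j) (us k)) * a1 (us j) (us n)) •
            (B u * ((((List.range n).filter (fun k => k ≠ j)).map
                (fun k => B (us k))).prod * B (us n)) * A (us j)) := by
      intro j hj
      have hjn : n ≠ j := fun h => absurd h.symm (Finset.mem_range.1 hj).ne
      have hfj : (List.range (n+1)).filter (fun k => k ≠ j)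
          = ((List.range n).filter (fun k => k ≠ j)) ++ [n] := by
        rw [List.range_succ, List.filter_append]
        simp [hjn]
      rw [hfj, Finset.range_add_one, Finset.erase_insert_of_ne hjn,
        Finset.prod_insert (fun h => absurd (Finset.mem_of_mem_erase h) (by simp))]
      congr 1
      · ring
      · simp [mul_assoc]
    rw [Finset.sum_congr rfl hsumR,
      ← scal_aux a1 a2 hId us n u (us n), add_smul]
    module
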